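/- For every k ≥ 0 the alternating minimization iterates satisfy H^k − H* ≤ [(1 − σβ₁/L₁)(1 − σβ₂/L₂)]^k (H⁰ − H*). -/

import Mathlib

open Set Filter

lemma dir_ineq {E : Type*} [NormedAddCommGroup E] [NormedSpace ℝ E]
    (f : E → ℝ) (S : Set E) (x y : E)
    (D : E →L[ℝ] ℝ) (hf : HasFDerivWithinAt f D S x)
    (hseg : ∀ s : ℝ, s ∈ Set.Icc (0:ℝ) 1 → x + s • (y - x) ∈ S)
    (c : ℝ)
    (hmin : ∀ s : ℝ, s ∈ Set.Icc (0:ℝ) 1 → s * c ≤ f (x + s • (y - x)) - f x) :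
    c ≤ D (y - x) := by
  set γ : ℝ → E := fun s => x + s • (y - x) with hγdef
  have hγ0 : γ 0 = x := by simp [hγdef]
  have hγd : HasDerivWithinAt γ (y - x) (Set.Icc (0:ℝ) 1) 0 := by
    have : HasDerivAt γ (y - x) 0 := by
      simpa [hγdef] using ((hasDerivAt_id (0:ℝ)).smul_const (y - x)).const_add x
    exact this.hasDerivWithinAt
  have hmaps : Set.MapsTo γ (Set.Icc (0:ℝ) 1) S := fun s hs => hseg s hs
  have hφ : HasDerivWithinAt (f ∘ γ) (D (y - x)) (Set.Icc (0:ℝ) 1) 0 :=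
    HasFDerivWithinAt.comp_hasDerivWithinAt_of_eq 0 hf hγd hmaps hγ0.symm
  rw [hasDerivWithinAt_iff_tendsto_slope] at hφ
  have hsub : Set.Ioo (0:ℝ) 1 ⊆ Set.Icc (0:ℝ) 1 \ {0} := fun s hs =>
    ⟨⟨hs.1.le, hs.2.le⟩, ne_of_gt hs.1⟩
  have hne : (nhdsWithin (0:ℝ) (Set.Ioo (0:ℝ) 1)).NeBot := by
    apply mem_closure_iff_nhdsWithin_neBot.mp
    rw [closure_Ioo (by norm_num : (0:ℝ) ≠ 1)]
    exact ⟨le_refl 0, by norm_num⟩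
  have htend : Tendsto (slope (f ∘ γ) 0) (nhdsWithin 0 (Set.Ioo (0:ℝ) 1)) (nhds (D (y - x))) :=
    hφ.mono_left (nhdsWithin_mono 0 hsub)
  refine ge_of_tendsto htend ?_
  filter_upwards [self_mem_nhdsWithin] with s hs
  have hs01 : s ∈ Set.Icc (0:ℝ) 1 := ⟨hs.1.le, hs.2.le⟩
  have h := hmin s hs01
  have hγs : γ s = x + s • (y - x) := rfl
  rw [slope_def_field]
  simp only [Function.comp_apply, hγ0, sub_zero]
  rw [le_div_iff₀ hs.1]
  calc c * s = s * c := by ring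
    _ ≤ f (x + s • (y - x)) - f x := h
    _ = f (γ s) - f x := rfl
open Set

/-- The composite objective function `H(x₁,x₂) = f(x₁,x₂) + g₁(x₁) + g₂(x₂)`. -/
noncomputable def objFun {B₁ B₂ : Type*} (f : B₁ × B₂ → ℝ) (g₁ : B₁ → ℝ) (g₂ : B₂ → ℝ)
    (x : B₁ × B₂) : ℝ :=
  f x + g₁ x.1 + g₂ x.2

/-- linear convergence of alternating minimization under quasi-strong
convexity: for every `k ≥ 0`,
`H^k - H* ≤ [(1 - σβ₁/L₁) (1 - σβ₂/L₂)]^k (H⁰ - H*)`. -/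
theorem stmt1
    {B₁ B₂ : Type*}
    [NormedAddCommGroup B₁] [NormedSpace ℝ B₁] [CompleteSpace B₁]
    [NormedAddCommGroup B₂] [NormedSpace ℝ B₂] [CompleteSpace B₂]
    (f : B₁ × B₂ → ℝ) (Df : B₁ × B₂ → (B₁ × B₂) →L[ℝ] ℝ)
    (g₁ : B₁ → ℝ) (g₂ : B₂ → ℝ) (S₁ : Set B₁) (S₂ : Set B₂)
    -- (P3): g₁, g₂ proper convex, subdifferentiable on their domains
    (hS₁c : Convex ℝ S₁) (hS₂c : Convex ℝ S₂)
    (hS₁ne : S₁.Nonempty) (hS₂ne : S₂.Nonempty)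
    (hg₁conv : ConvexOn ℝ S₁ g₁) (hg₂conv : ConvexOn ℝ S₂ g₂)
    (hg₁sub : ∀ x₁ ∈ S₁, ∃ d : B₁ →L[ℝ] ℝ, ∀ y₁ ∈ S₁, g₁ x₁ + d (y₁ - x₁) ≤ g₁ y₁)
    (hg₂sub : ∀ x₂ ∈ S₂, ∃ d : B₂ →L[ℝ] ℝ, ∀ y₂ ∈ S₂, g₂ x₂ + d (y₂ - x₂) ≤ g₂ y₂)
    -- (P4): f convex and Fréchet differentiable on dom g₁ × dom g₂, with derivative Df
    (hfconv : ConvexOn ℝ (S₁ ×ˢ S₂) f)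
    (hfdiff : ∀ x ∈ S₁ ×ˢ S₂, HasFDerivWithinAt f (Df x) (S₁ ×ˢ S₂) x)
    -- (P2): a norm `N` on the product space and the constants β₁, β₂
    (N : B₁ × B₂ → ℝ) (β₁ β₂ : ℝ) (hβ₁ : 0 ≤ β₁) (hβ₂ : 0 ≤ β₂)
    (hNnonneg : ∀ z : B₁ × B₂, 0 ≤ N z)
    (hN₁ : ∀ z : B₁ × B₂, β₁ * ‖z.1‖ ^ 2 ≤ N z ^ 2)
    (hN₂ : ∀ z : B₁ × B₂, β₂ * ‖z.2‖ ^ 2 ≤ N z ^ 2)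
    -- (P5): block descent inequalities with finite constants L₁, L₂ > 0
    (L₁ L₂ : ℝ) (hL₁pos : 0 < L₁) (hL₂pos : 0 < L₂)
    (hdesc₁ : ∀ x₁ ∈ S₁, ∀ x₂ ∈ S₂, ∀ h₁ : B₁, x₁ + h₁ ∈ S₁ →
      f (x₁ + h₁, x₂) ≤ f (x₁, x₂) + Df (x₁, x₂) (h₁, 0) + L₁ / 2 * ‖h₁‖ ^ 2)
    (hdesc₂ : ∀ x₁ ∈ S₁, ∀ x₂ ∈ S₂, ∀ h₂ : B₂, x₂ + h₂ ∈ S₂ →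
      f (x₁, x₂ + h₂) ≤ f (x₁, x₂) + Df (x₁, x₂) (0, h₂) + L₂ / 2 * ‖h₂‖ ^ 2)
    -- (P6): nonempty optimal set X with optimal value H*
    (X : Set (B₁ × B₂))
    (hX : X = {y ∈ S₁ ×ˢ S₂ | ∀ z ∈ S₁ ×ˢ S₂, objFun f g₁ g₂ y ≤ objFun f g₁ g₂ z})
    (hXne : X.Nonempty)
    (Hstar : ℝ) (hHstar : ∀ y ∈ X, objFun f g₁ g₂ y = Hstar)
    -- projections onto X with respect to N
    (proj : B₁ × B₂ → B₁ × B₂)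
    (hproj : ∀ z ∈ S₁ ×ˢ S₂, proj z ∈ X ∧ ∀ y ∈ X, N (z - proj z) ≤ N (z - y))
    -- (P8a): quasi-strong convexity of f with modulus σ > 0
    (σ : ℝ) (hσ : 0 < σ)
    (hqsc : ∀ z ∈ S₁ ×ˢ S₂,
      f z + Df z (proj z - z) + σ / 2 * N (z - proj z) ^ 2 ≤ f (proj z))
    (hσβ₁ : σ * β₁ ≤ L₁) (hσβ₂ : σ * β₂ ≤ L₂)
    -- the alternating minimization sequence
    (x : ℕ → B₁ × B₂)
    (hx0 : x 0 ∈ S₁ ×ˢ S₂)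
    (hinit : ∀ y₂ ∈ S₂, objFun f g₁ g₂ (x 0) ≤ objFun f g₁ g₂ ((x 0).1, y₂))
    (hstep1 : ∀ k : ℕ, (x (k + 1)).1 ∈ S₁ ∧ ∀ y₁ ∈ S₁,
      objFun f g₁ g₂ ((x (k + 1)).1, (x k).2) ≤ objFun f g₁ g₂ (y₁, (x k).2))
    (hstep2 : ∀ k : ℕ, (x (k + 1)).2 ∈ S₂ ∧ ∀ y₂ ∈ S₂,
      objFun f g₁ g₂ (x (k + 1)) ≤ objFun f g₁ g₂ ((x (k + 1)).1, y₂)) :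
    ∀ k : ℕ,
      objFun f g₁ g₂ (x k) - Hstar ≤
        ((1 - σ * β₁ / L₁) * (1 - σ * β₂ / L₂)) ^ k *
          (objFun f g₁ g₂ (x 0) - Hstar) := by

  -- abbreviations
  have hρ₁0 : 0 ≤ 1 - σ * β₁ / L₁ := by
    have : σ * β₁ / L₁ ≤ 1 := by rw [div_le_one hL₁pos]; exact hσβ₁
    linarith
  have hρ₂0 : 0 ≤ 1 - σ * β₂ / L₂ := by
    have : σ * β₂ / L₂ ≤ 1 := by rw [div_le_one hL₂pos]; exact hσβ₂
    linarith
  -- Key step for block 1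
  have key1 : ∀ a : B₁ × B₂, a ∈ S₁ ×ˢ S₂ →
      (∀ y₂ ∈ S₂, objFun f g₁ g₂ a ≤ objFun f g₁ g₂ (a.1, y₂)) →
      ∀ b₁ ∈ S₁, (∀ y₁ ∈ S₁, objFun f g₁ g₂ (b₁, a.2) ≤ objFun f g₁ g₂ (y₁, a.2)) →
      objFun f g₁ g₂ (b₁, a.2) - Hstar ≤ (1 - σ * β₁ / L₁) * (objFun f g₁ g₂ a - Hstar) := by
    intro a ha hopt2 b₁ hb₁ hopt1
    have ha1 : a.1 ∈ S₁ := ha.1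
    have ha2 : a.2 ∈ S₂ := ha.2
    have hxbX : proj a ∈ X := (hproj a ha).1
    have hxbS : proj a ∈ S₁ ×ˢ S₂ := by rw [hX] at hxbX; exact hxbX.1
    have hHxb : f (proj a) + g₁ (proj a).1 + g₂ (proj a).2 = Hstar := hHstar _ hxbX
    set t : ℝ := σ * β₁ / L₁ with htdef
    have ht0 : 0 ≤ t := by positivity
    have ht1 : t ≤ 1 := by rw [htdef, div_le_one hL₁pos]; exact hσβ₁
    have htL : t * L₁ = σ * β₁ := by rw [htdef]; field_simp
    -- directional optimality in block 2
    have hdir : g₂ a.2 - g₂ (proj a).2 ≤ Df a (0, (proj a).2 - a.2) := by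
      have key := dir_ineq f (S₁ ×ˢ S₂) a (a.1, (proj a).2) (Df a) (hfdiff a ha)
        (fun s hs => ?_) (g₂ a.2 - g₂ (proj a).2) (fun s hs => ?_)
      · have heq : (a.1, (proj a).2) - a = ((0 : B₁), (proj a).2 - a.2) := by
          ext <;> simp
        rwa [heq] at key
      · -- segment in S
        have heq : a + s • ((a.1, (proj a).2) - a)
            = (a.1, a.2 + s • ((proj a).2 - a.2)) := by ext <;> simp
        rw [heq]
        refine ⟨ha1, ?_⟩
        have heq2 : a.2 + s • ((proj a).2 - a.2) = (1 - s) • a.2 + s • (proj a).2 := by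
          module
        rw [heq2]
        exact hS₂c ha2 hxbS.2 (by linarith [hs.2]) hs.1 (by ring)
      · -- minimality inequality
        have heq : a + s • ((a.1, (proj a).2) - a)
            = (a.1, a.2 + s • ((proj a).2 - a.2)) := by ext <;> simp
        have heq2 : a.2 + s • ((proj a).2 - a.2) = (1 - s) • a.2 + s • (proj a).2 := by
          module
        have hyS : a.2 + s • ((proj a).2 - a.2) ∈ S₂ := by
          rw [heq2]; exact hS₂c ha2 hxbS.2 (by linarith [hs.2]) hs.1 (by ring)
        have h1 := hopt2 _ hyS
        have h2 : g₂ (a.2 + s • ((proj a).2 - a.2))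
            ≤ (1 - s) * g₂ a.2 + s * g₂ (proj a).2 := by
          rw [heq2]
          exact hg₂conv.2 ha2 hxbS.2 (by linarith [hs.2]) hs.1 (by ring)
        rw [heq]
        simp only [objFun] at h1 ⊢
        nlinarith [h1, h2]
    -- descent step
    set p : B₁ := a.1 + t • ((proj a).1 - a.1) with hpdef
    have hpeq : p = (1 - t) • a.1 + t • (proj a).1 := by rw [hpdef]; module
    have hpS : p ∈ S₁ := by rw [hpeq]; exact hS₁c ha1 hxbS.1 (by linarith) ht0 (by ring)
    have hg1p : g₁ p ≤ (1 - t) * g₁ a.1 + t * g₁ (proj a).1 := by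
      rw [hpeq]; exact hg₁conv.2 ha1 hxbS.1 (by linarith) ht0 (by ring)
    have hdescp : f (p, a.2) ≤ f a + t * Df a ((proj a).1 - a.1, 0)
        + L₁ / 2 * (t ^ 2 * ‖(proj a).1 - a.1‖ ^ 2) := by
      have h := hdesc₁ a.1 ha1 a.2 ha2 (t • ((proj a).1 - a.1)) (by rw [← hpdef]; exact hpS)
      have hsm : ((t • ((proj a).1 - a.1), (0 : B₂)) : B₁ × B₂)
          = t • (((proj a).1 - a.1, (0 : B₂)) : B₁ × B₂) := by ext <;> simp
      have hnorm : ‖t • ((proj a).1 - a.1)‖ ^ 2 = t ^ 2 * ‖(proj a).1 - a.1‖ ^ 2 := by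
        rw [norm_smul, Real.norm_eq_abs, abs_of_nonneg ht0]; ring
      rw [hsm, map_smul, hnorm] at h
      simpa [hpdef] using h
    -- quasi-strong convexity split
    have hqsca : f a + Df a ((proj a).1 - a.1, 0) + Df a (0, (proj a).2 - a.2)
        + σ / 2 * N (a - proj a) ^ 2 ≤ f (proj a) := by
      have h := hqsc a ha
      have hsplit : proj a - a = (((proj a).1 - a.1, (0 : B₂)) : B₁ × B₂)
          + ((0 : B₁), (proj a).2 - a.2) := by ext <;> simp
      rw [hsplit, map_add] at h
      linarith
    have hNb : β₁ * ‖(proj a).1 - a.1‖ ^ 2 ≤ N (a - proj a) ^ 2 := by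
      have h := hN₁ (a - proj a)
      have : ‖(a - proj a).1‖ = ‖(proj a).1 - a.1‖ := by
        rw [Prod.fst_sub, norm_sub_rev]
      rwa [this] at h
    have hub := hopt1 p hpS
    -- combine
    have c1 : t * σ / 2 * (β₁ * ‖(proj a).1 - a.1‖ ^ 2) ≤ t * σ / 2 * N (a - proj a) ^ 2 :=
      mul_le_mul_of_nonneg_left hNb (by positivity)
    have c2 : t * σ / 2 * (β₁ * ‖(proj a).1 - a.1‖ ^ 2)
        = L₁ / 2 * (t ^ 2 * ‖(proj a).1 - a.1‖ ^ 2) := by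
      have h : t * σ * β₁ = t * (t * L₁) := by rw [htL]; ring
      linear_combination (‖(proj a).1 - a.1‖ ^ 2 / 2) * h
    have c4 := mul_le_mul_of_nonneg_left hqsca ht0
    have c5 := mul_le_mul_of_nonneg_left hdir ht0
    have c6 : t * (f (proj a) + g₁ (proj a).1 + g₂ (proj a).2) = t * Hstar := by
      rw [hHxb]
    simp only [objFun] at hub ⊢
    linarith [hub, hdescp, hg1p, c1, c2, c4, c5, c6]
  -- Key step for block 2
  have key2 : ∀ a : B₁ × B₂, a ∈ S₁ ×ˢ S₂ →
      (∀ y₁ ∈ S₁, objFun f g₁ g₂ a ≤ objFun f g₁ g₂ (y₁, a.2)) →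
      ∀ b₂ ∈ S₂, (∀ y₂ ∈ S₂, objFun f g₁ g₂ (a.1, b₂) ≤ objFun f g₁ g₂ (a.1, y₂)) →
      objFun f g₁ g₂ (a.1, b₂) - Hstar ≤ (1 - σ * β₂ / L₂) * (objFun f g₁ g₂ a - Hstar) := by
    intro a ha hopt1 b₂ hb₂ hopt2
    have ha1 : a.1 ∈ S₁ := ha.1
    have ha2 : a.2 ∈ S₂ := ha.2
    have hxbX : proj a ∈ X := (hproj a ha).1
    have hxbS : proj a ∈ S₁ ×ˢ S₂ := by rw [hX] at hxbX; exact hxbX.1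
    have hHxb : f (proj a) + g₁ (proj a).1 + g₂ (proj a).2 = Hstar := hHstar _ hxbX
    set t : ℝ := σ * β₂ / L₂ with htdef
    have ht0 : 0 ≤ t := by positivity
    have ht1 : t ≤ 1 := by rw [htdef, div_le_one hL₂pos]; exact hσβ₂
    have htL : t * L₂ = σ * β₂ := by rw [htdef]; field_simp
    -- directional optimality in block 1
    have hdir : g₁ a.1 - g₁ (proj a).1 ≤ Df a ((proj a).1 - a.1, 0) := by
      have key := dir_ineq f (S₁ ×ˢ S₂) a ((proj a).1, a.2) (Df a) (hfdiff a ha)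
        (fun s hs => ?_) (g₁ a.1 - g₁ (proj a).1) (fun s hs => ?_)
      · have heq : ((proj a).1, a.2) - a = (((proj a).1 - a.1, (0 : B₂)) : B₁ × B₂) := by
          ext <;> simp
        rwa [heq] at key
      · have heq : a + s • (((proj a).1, a.2) - a)
            = (a.1 + s • ((proj a).1 - a.1), a.2) := by ext <;> simp
        rw [heq]
        refine ⟨?_, ha2⟩
        have heq2 : a.1 + s • ((proj a).1 - a.1) = (1 - s) • a.1 + s • (proj a).1 := by
          module
        rw [heq2]
        exact hS₁c ha1 hxbS.1 (by linarith [hs.2]) hs.1 (by ring)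
      · have heq : a + s • (((proj a).1, a.2) - a)
            = (a.1 + s • ((proj a).1 - a.1), a.2) := by ext <;> simp
        have heq2 : a.1 + s • ((proj a).1 - a.1) = (1 - s) • a.1 + s • (proj a).1 := by
          module
        have hyS : a.1 + s • ((proj a).1 - a.1) ∈ S₁ := by
          rw [heq2]; exact hS₁c ha1 hxbS.1 (by linarith [hs.2]) hs.1 (by ring)
        have h1 := hopt1 _ hyS
        have h2 : g₁ (a.1 + s • ((proj a).1 - a.1))
            ≤ (1 - s) * g₁ a.1 + s * g₁ (proj a).1 := by
          rw [heq2]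
          exact hg₁conv.2 ha1 hxbS.1 (by linarith [hs.2]) hs.1 (by ring)
        rw [heq]
        simp only [objFun] at h1 ⊢
        nlinarith [h1, h2]
    -- descent step
    set p : B₂ := a.2 + t • ((proj a).2 - a.2) with hpdef
    have hpeq : p = (1 - t) • a.2 + t • (proj a).2 := by rw [hpdef]; module
    have hpS : p ∈ S₂ := by rw [hpeq]; exact hS₂c ha2 hxbS.2 (by linarith) ht0 (by ring)
    have hg2p : g₂ p ≤ (1 - t) * g₂ a.2 + t * g₂ (proj a).2 := by
      rw [hpeq]; exact hg₂conv.2 ha2 hxbS.2 (by linarith) ht0 (by ring)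
    have hdescp : f (a.1, p) ≤ f a + t * Df a (0, (proj a).2 - a.2)
        + L₂ / 2 * (t ^ 2 * ‖(proj a).2 - a.2‖ ^ 2) := by
      have h := hdesc₂ a.1 ha1 a.2 ha2 (t • ((proj a).2 - a.2)) (by rw [← hpdef]; exact hpS)
      have hsm : (((0 : B₁), t • ((proj a).2 - a.2)) : B₁ × B₂)
          = t • (((0 : B₁), (proj a).2 - a.2) : B₁ × B₂) := by ext <;> simp
      have hnorm : ‖t • ((proj a).2 - a.2)‖ ^ 2 = t ^ 2 * ‖(proj a).2 - a.2‖ ^ 2 := by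
        rw [norm_smul, Real.norm_eq_abs, abs_of_nonneg ht0]; ring
      rw [hsm, map_smul, hnorm] at h
      simpa [hpdef] using h
    have hqsca : f a + Df a ((proj a).1 - a.1, 0) + Df a (0, (proj a).2 - a.2)
        + σ / 2 * N (a - proj a) ^ 2 ≤ f (proj a) := by
      have h := hqsc a ha
      have hsplit : proj a - a = (((proj a).1 - a.1, (0 : B₂)) : B₁ × B₂)
          + ((0 : B₁), (proj a).2 - a.2) := by ext <;> simp
      rw [hsplit, map_add] at h
      linarith
    have hNb : β₂ * ‖(proj a).2 - a.2‖ ^ 2 ≤ N (a - proj a) ^ 2 := by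
      have h := hN₂ (a - proj a)
      have : ‖(a - proj a).2‖ = ‖(proj a).2 - a.2‖ := by
        rw [Prod.snd_sub, norm_sub_rev]
      rwa [this] at h
    have hub := hopt2 p hpS
    have c1 : t * σ / 2 * (β₂ * ‖(proj a).2 - a.2‖ ^ 2) ≤ t * σ / 2 * N (a - proj a) ^ 2 :=
      mul_le_mul_of_nonneg_left hNb (by positivity)
    have c2 : t * σ / 2 * (β₂ * ‖(proj a).2 - a.2‖ ^ 2)
        = L₂ / 2 * (t ^ 2 * ‖(proj a).2 - a.2‖ ^ 2) := by
      have h : t * σ * β₂ = t * (t * L₂) := by rw [htL]; ring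
      linear_combination (‖(proj a).2 - a.2‖ ^ 2 / 2) * h
    have c4 := mul_le_mul_of_nonneg_left hqsca ht0
    have c5 := mul_le_mul_of_nonneg_left hdir ht0
    have c6 : t * (f (proj a) + g₁ (proj a).1 + g₂ (proj a).2) = t * Hstar := by
      rw [hHxb]
    simp only [objFun] at hub ⊢
    linarith [hub, hdescp, hg2p, c1, c2, c4, c5, c6]
  -- membership and optimality facts along the sequence
  have hmem : ∀ k : ℕ, x k ∈ S₁ ×ˢ S₂ := by
    intro k
    cases k with
    | zero => exact hx0
    | succ n => exact ⟨(hstep1 n).1, (hstep2 n).1⟩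
  have hopt2k : ∀ k : ℕ, ∀ y₂ ∈ S₂, objFun f g₁ g₂ (x k) ≤ objFun f g₁ g₂ ((x k).1, y₂) := by
    intro k
    cases k with
    | zero => exact hinit
    | succ n => exact (hstep2 n).2
  have hnonneg : ∀ k : ℕ, 0 ≤ objFun f g₁ g₂ (x k) - Hstar := by
    intro k
    obtain ⟨y, hy⟩ := hXne
    have h1 : objFun f g₁ g₂ y = Hstar := hHstar y hy
    rw [hX] at hy
    have h2 := hy.2 (x k) (hmem k)
    linarith
  -- one full iteration
  have hchain : ∀ k : ℕ, objFun f g₁ g₂ (x (k + 1)) - Hstar ≤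
      ((1 - σ * β₁ / L₁) * (1 - σ * β₂ / L₂)) * (objFun f g₁ g₂ (x k) - Hstar) := by
    intro k
    have hmid := key1 (x k) (hmem k) (hopt2k k) (x (k + 1)).1 (hstep1 k).1 (hstep1 k).2
    have hmidS : (((x (k + 1)).1, (x k).2) : B₁ × B₂) ∈ S₁ ×ˢ S₂ :=
      ⟨(hstep1 k).1, (hmem k).2⟩
    have hmopt1 : ∀ y₁ ∈ S₁, objFun f g₁ g₂ (((x (k + 1)).1, (x k).2) : B₁ × B₂)
        ≤ objFun f g₁ g₂ (y₁, (((x (k + 1)).1, (x k).2) : B₁ × B₂).2) := fun y₁ hy₁ =>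
      (hstep1 k).2 y₁ hy₁
    have hmopt2 : ∀ y₂ ∈ S₂,
        objFun f g₁ g₂ ((((x (k + 1)).1, (x k).2) : B₁ × B₂).1, (x (k + 1)).2)
        ≤ objFun f g₁ g₂ ((((x (k + 1)).1, (x k).2) : B₁ × B₂).1, y₂) := fun y₂ hy₂ =>
      (hstep2 k).2 y₂ hy₂
    have hfin := key2 (((x (k + 1)).1, (x k).2) : B₁ × B₂) hmidS hmopt1
      (x (k + 1)).2 (hstep2 k).1 hmopt2
    have hx1 : ((((x (k + 1)).1, (x k).2) : B₁ × B₂).1, (x (k + 1)).2) = x (k + 1) := rfl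
    rw [hx1] at hfin
    have := mul_le_mul_of_nonneg_left hmid hρ₂0
    calc objFun f g₁ g₂ (x (k + 1)) - Hstar
        ≤ (1 - σ * β₂ / L₂) * (objFun f g₁ g₂ (((x (k + 1)).1, (x k).2) : B₁ × B₂) - Hstar) :=
          hfin
      _ ≤ (1 - σ * β₂ / L₂) * ((1 - σ * β₁ / L₁) * (objFun f g₁ g₂ (x k) - Hstar)) := this
      _ = ((1 - σ * β₁ / L₁) * (1 - σ * β₂ / L₂)) * (objFun f g₁ g₂ (x k) - Hstar) := by ring
  -- induction
  intro k
  induction k with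
  | zero => simp
  | succ n ih =>
    have hρ : 0 ≤ (1 - σ * β₁ / L₁) * (1 - σ * β₂ / L₂) := mul_nonneg hρ₁0 hρ₂0
    calc objFun f g₁ g₂ (x (n + 1)) - Hstar
        ≤ ((1 - σ * β₁ / L₁) * (1 - σ * β₂ / L₂)) * (objFun f g₁ g₂ (x n) - Hstar) :=
          hchain n
      _ ≤ ((1 - σ * β₁ / L₁) * (1 - σ * β₂ / L₂)) *
          (((1 - σ * β₁ / L₁) * (1 - σ * β₂ / L₂)) ^ n * (objFun f g₁ g₂ (x 0) - Hstar)) :=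
          mul_le_mul_of_nonneg_left ih hρ
      _ = ((1 - σ * β₁ / L₁) * (1 - σ * β₂ / L₂)) ^ (n + 1) *
          (objFun f g₁ g₂ (x 0) - Hstar) := by ring
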